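/- Let p be a prime with p ≡ 1 (mod 4) and let u_p be the Björck sequence of length p. Then u_p is a CAZAC sequence: |u_p[k]| = 1 for all k ∈ ℤ/pℤ, and (1/p) ∑_{k=0}^{p-1} u_p[m+k] · conj(u_p[k]) = 0 for all m ∈ ℤ/pℤ \ {0}. -/

import Mathlib

open scoped BigOperators Classical

noncomputable section

/-- The Legendre symbol modulo `p`, viewed as a complex-valued function on `ZMod p`:
`1` on nonzero quadratic residues, `0` at `0`, `-1` on quadratic nonresidues. -/
def chi (p : ℕ) (k : ZMod p) : ℂ :=
  if k = 0 then 0 else if ∃ m : ZMod p, m ^ 2 = k then 1 else -1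

/-- The Legendre symbol modulo `p`, viewed as an integer-valued function on `ZMod p`. -/
def chiZ (p : ℕ) (k : ZMod p) : ℤ :=
  if k = 0 then 0 else if ∃ m : ZMod p, m ^ 2 = k then 1 else -1

/-- The discrete periodic (narrow band) ambiguity function
`A_p(u)[m,n] = (1/p) ∑_k u[k+m] conj(u[k]) e^{-2πi k n/p}`. -/
def ambig (p : ℕ) [NeZero p] (u : ZMod p → ℂ) (m n : ZMod p) : ℂ :=
  (1 / (p : ℂ)) * ∑ k : ZMod p,
    u (k + m) * (starRingEnd ℂ) (u k) *
      Complex.exp (-2 * Real.pi * Complex.I * (k.val : ℂ) * (n.val : ℂ) / (p : ℂ))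

/-- The Kloosterman sum `K[a,b;p] = ∑_{x ∈ (ℤ/pℤ)ˣ} e^{2πi(ax + b x⁻¹)/p}`. -/
def kloost (p : ℕ) [NeZero p] (a b : ℤ) : ℂ :=
  ∑ x : (ZMod p)ˣ,
    Complex.exp (2 * Real.pi * Complex.I *
      ((((a : ZMod p) * (x : ZMod p) + (b : ZMod p) * ((x⁻¹ : (ZMod p)ˣ) : ZMod p)).val : ℂ))
        / (p : ℂ))

/-- The Björck sequence of length `p` for a prime `p ≡ 1 (mod 4)`:
`u[k] = exp(iθχ(k))` with `θ = arccos (1/(1+√p))`. -/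
def bjorck1 (p : ℕ) (k : ZMod p) : ℂ :=
  Complex.exp (Complex.I * (Real.arccos (1 / (1 + Real.sqrt p)) : ℂ) * chi p k)

/-- The Björck sequence of length `p` for a prime `p ≡ 3 (mod 4)`:
`u[k] = exp(iφ)` with `φ = arccos ((1-p)/(1+p))` if `k` is a quadratic nonresidue,
and `u[k] = 1` otherwise. -/
def bjorck3 (p : ℕ) (k : ZMod p) : ℂ :=
  if ∀ m : ZMod p, m ^ 2 ≠ k then
    Complex.exp (Complex.I * (Real.arccos ((1 - (p : ℝ)) / (1 + (p : ℝ))) : ℂ))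
  else 1

end

noncomputable def th (p : ℕ) : ℝ := Real.arccos (1 / (1 + Real.sqrt p))

section Aux
variable {p : ℕ} [hp : Fact p.Prime]

variable {p : ℕ} [hp : Fact p.Prime] (hp4 : p % 4 = 1)

lemma char_ne_two (hp4 : p % 4 = 1) : ringChar (ZMod p) ≠ 2 := by
  rw [ZMod.ringChar_zmod_n]
  rintro rfl; norm_num at hp4

lemma chi_eq (k : ZMod p) : chi p k = ((quadraticChar (ZMod p) k : ℤ) : ℂ) := by
  rw [chi, quadraticChar_apply, quadraticCharFun]
  have : (∃ m : ZMod p, m ^ 2 = k) ↔ IsSquare k := by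
    constructor
    · rintro ⟨m, rfl⟩; exact ⟨m, (sq m).symm ▸ rfl⟩
    · rintro ⟨m, rfl⟩; exact ⟨m, sq m⟩
  split_ifs with h1 h2 h3 <;> simp_all

lemma sum_chi (hp4 : p % 4 = 1) : ∑ k : ZMod p, chi p k = 0 := by
  have h : ∑ k : ZMod p, (quadraticChar (ZMod p) k : ℤ) = 0 :=
    quadraticChar_sum_zero (char_ne_two hp4)
  calc ∑ k : ZMod p, chi p k
      = ((∑ k : ZMod p, (quadraticChar (ZMod p) k : ℤ) : ℤ) : ℂ) := by
        push_cast; exact Finset.sum_congr rfl fun k _ => chi_eq k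
    _ = 0 := by rw [h]; norm_num

lemma sum_chi_shift (hp4 : p % 4 = 1) (m : ZMod p) : ∑ k : ZMod p, chi p (m + k) = 0 := by
  rw [Fintype.sum_equiv (Equiv.addLeft m) (fun k => chi p (m + k)) (chi p) (fun k => rfl)]
  exact sum_chi hp4

lemma chi_neg (hp4 : p % 4 = 1) (k : ZMod p) : chi p (-k) = chi p k := by
  have h : quadraticChar (ZMod p) (-1) = 1 := by
    rw [quadraticChar_neg_one (char_ne_two hp4), ZMod.card]
    exact ZMod.χ₄_nat_one_mod_four hp4
  rw [chi_eq, chi_eq, show (-k : ZMod p) = -1 * k by ring, map_mul, h, one_mul]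

lemma sumXY (hp4 : p % 4 = 1) (m : ZMod p) (hm : m ≠ 0) :
    ∑ k : ZMod p, (quadraticChar (ZMod p) (m + k) * quadraticChar (ZMod p) k : ℤ) = -1 := by
  classical
  set χ := quadraticChar (ZMod p) with hχ
  have hz : (χ (0 : ZMod p) : ℤ) = 0 := by simp [hχ, quadraticCharFun]
  have h0 : ∑ k : ZMod p, (χ (m + k) * χ k : ℤ)
      = ∑ k ∈ Finset.univ.erase (0 : ZMod p), (χ (m + k) * χ k : ℤ) := by
    have := Finset.sum_erase_add Finset.univ (fun k => (χ (m + k) * χ k : ℤ))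
      (Finset.mem_univ (0 : ZMod p))
    simp only [hz, mul_zero] at this
    linarith
  have h1 : ∑ k ∈ Finset.univ.erase (0 : ZMod p), (χ (m + k) * χ k : ℤ)
      = ∑ y ∈ Finset.univ.erase (1 : ZMod p), (χ y : ℤ) := by
    refine Finset.sum_nbij' (fun k => m * k⁻¹ + 1) (fun y => m * (y - 1)⁻¹) ?_ ?_ ?_ ?_ ?_
    · intro k hk
      simp only [Finset.mem_erase, Finset.mem_univ, and_true] at hk ⊢
      intro h
      have : m * k⁻¹ = 0 := by linear_combination h
      rcases mul_eq_zero.1 this with h' | h'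
      · exact hm h'
      · exact hk (by simpa using inv_eq_zero.1 h')
    · intro y hy
      simp only [Finset.mem_erase, Finset.mem_univ, and_true] at hy ⊢
      intro h
      rcases mul_eq_zero.1 h with h' | h'
      · exact hm h'
      · exact hy (sub_eq_zero.1 (inv_eq_zero.1 h'))
    · intro k hk
      simp only [Finset.mem_erase, Finset.mem_univ, and_true] at hk
      field_simp
      simp [hm]
    · intro y hy
      simp only [Finset.mem_erase, Finset.mem_univ, and_true] at hy
      have : y - 1 ≠ 0 := fun h => hy (by linear_combination h)
      field_simp
      ring
    · intro k hk
      simp only [Finset.mem_erase, Finset.mem_univ, and_true] at hk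
      have key : (m + k) * k = (m * k⁻¹ + 1) * k ^ 2 := by field_simp
      calc (χ (m + k) * χ k : ℤ) = χ ((m + k) * k) := (map_mul χ _ _).symm
        _ = χ (m * k⁻¹ + 1) * χ k ^ 2 := by rw [key, map_mul, map_pow]
        _ = χ (m * k⁻¹ + 1) := by rw [quadraticChar_sq_one hk, mul_one]
  rw [h0, h1]
  have h2 := Finset.sum_erase_add Finset.univ (fun y => (χ y : ℤ)) (Finset.mem_univ (1 : ZMod p))
  have h3 : ∑ y : ZMod p, (χ y : ℤ) = 0 := quadraticChar_sum_zero (char_ne_two hp4)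
  have h4 : (χ 1 : ℤ) = 1 := by simp [hχ]
  rw [h4] at h2
  linarith

lemma sum_chi_mul (hp4 : p % 4 = 1) (m : ZMod p) (hm : m ≠ 0) :
    ∑ k : ZMod p, chi p (m + k) * chi p k = -1 := by
  have := sumXY hp4 m hm
  calc ∑ k : ZMod p, chi p (m + k) * chi p k
      = ((∑ k : ZMod p, (quadraticChar (ZMod p) (m + k) * quadraticChar (ZMod p) k : ℤ) : ℤ) : ℂ) := by
        push_cast
        exact Finset.sum_congr rfl fun k _ => by rw [chi_eq, chi_eq]
    _ = -1 := by rw [this]; norm_num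

end Aux

lemma bjorck1_decomp (p : ℕ) (k : ZMod p) :
    bjorck1 p k = (Real.cos (th p) : ℂ)
      + Complex.I * (Real.sin (th p) : ℂ) * chi p k
      + ((1 - Real.cos (th p) : ℝ) : ℂ) * (if k = 0 then 1 else 0) := by
  unfold bjorck1 chi th
  set θ : ℝ := Real.arccos (1 / (1 + Real.sqrt p)) with hθ
  split_ifs with h1 h2
  · push_cast; simp
  · rw [show Complex.I * (θ : ℂ) * 1 = (θ : ℂ) * Complex.I by ring, Complex.exp_mul_I,
      ← Complex.ofReal_cos, ← Complex.ofReal_sin]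
    push_cast; ring
  · rw [show Complex.I * (θ : ℂ) * (-1) = (-(θ : ℂ)) * Complex.I by ring, Complex.exp_mul_I,
      Complex.cos_neg, Complex.sin_neg, ← Complex.ofReal_cos, ← Complex.ofReal_sin]
    push_cast; ring

lemma conj_chi (p : ℕ) (k : ZMod p) : (starRingEnd ℂ) (chi p k) = chi p k := by
  unfold chi; split_ifs <;> simp

lemma conj_bjorck1 (p : ℕ) (k : ZMod p) :
    (starRingEnd ℂ) (bjorck1 p k) = (Real.cos (th p) : ℂ)
      - Complex.I * (Real.sin (th p) : ℂ) * chi p k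
      + ((1 - Real.cos (th p) : ℝ) : ℂ) * (if k = 0 then 1 else 0) := by
  rw [bjorck1_decomp]
  simp only [map_add, map_mul, map_one, map_zero, Complex.conj_ofReal, Complex.conj_I,
    conj_chi, apply_ite (starRingEnd ℂ)]
  ring

lemma key_real (p : ℕ) :
    (p : ℝ) * (Real.cos (th p) * Real.cos (th p))
      + 2 * (Real.cos (th p) * (1 - Real.cos (th p))) - Real.sin (th p) ^ 2 = 0 := by
  have hs : Real.sqrt p ^ 2 = (p : ℝ) := Real.sq_sqrt (by positivity)
  have hnn : 0 ≤ Real.sqrt p := Real.sqrt_nonneg _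
  have h0 : (0 : ℝ) < 1 + Real.sqrt p := by linarith
  have hA : Real.cos (th p) = 1 / (1 + Real.sqrt p) := by
    refine Real.cos_arccos ?_ ?_
    · have : (0:ℝ) ≤ 1 / (1 + Real.sqrt p) := by positivity
      linarith
    · rw [div_le_one h0]; linarith
  rw [Real.sin_sq, hA]
  field_simp
  nlinarith [hs]

lemma abs_bjorck1 (p : ℕ) (k : ZMod p) : ‖bjorck1 p k‖ = 1 := by
  unfold bjorck1 chi
  split_ifs <;>
    simp [Complex.norm_exp, Complex.mul_re, Complex.mul_im, Complex.I_re, Complex.I_im]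

lemma sum_zero (p : ℕ) [Fact p.Prime] (hp4 : p % 4 = 1) (m : ZMod p) (hm : m ≠ 0) :
    ∑ k : ZMod p,
      ((Real.cos (th p) : ℂ) + Complex.I * (Real.sin (th p) : ℂ) * chi p (m + k)
          + ((1 - Real.cos (th p) : ℝ) : ℂ) * (if m + k = 0 then 1 else 0)) *
        ((Real.cos (th p) : ℂ) - Complex.I * (Real.sin (th p) : ℂ) * chi p k
          + ((1 - Real.cos (th p) : ℝ) : ℂ) * (if k = 0 then 1 else 0)) = 0 := by
  set a : ℂ := (Real.cos (th p) : ℂ) with ha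
  set b : ℂ := Complex.I * (Real.sin (th p) : ℂ) with hb
  set c : ℂ := ((1 - Real.cos (th p) : ℝ) : ℂ) with hc
  have hcond : ∀ k : ZMod p, m + k = 0 ↔ k = -m :=
    fun k => ⟨fun h => by linear_combination h, fun h => by linear_combination h⟩
  have expand : ∀ k : ZMod p,
      (a + b * chi p (m + k) + c * (if m + k = 0 then (1:ℂ) else 0)) *
        (a - b * chi p k + c * (if k = 0 then (1:ℂ) else 0))
      = a * a + (a * c) * (if k = 0 then (1:ℂ) else 0)
          + (a * c) * (if m + k = 0 then (1:ℂ) else 0)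
          + (a * b) * chi p (m + k) - (a * b) * chi p k
          - (b * b) * (chi p (m + k) * chi p k)
          + (b * c) * (chi p (m + k) * (if k = 0 then (1:ℂ) else 0))
          - (b * c) * ((if m + k = 0 then (1:ℂ) else 0) * chi p k)
          + (c * c) * ((if m + k = 0 then (1:ℂ) else 0) * (if k = 0 then (1:ℂ) else 0)) :=
    fun k => by ring
  have hE : ∑ k : ZMod p, (if k = 0 then (1:ℂ) else 0) = 1 := by simp
  have hD : ∑ k : ZMod p, (if m + k = 0 then (1:ℂ) else 0) = 1 := by
    simp only [hcond]; simp
  have hXE : ∑ k : ZMod p, chi p (m + k) * (if k = 0 then (1:ℂ) else 0) = chi p m := by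
    simp [mul_ite]
  have hDY : ∑ k : ZMod p, (if m + k = 0 then (1:ℂ) else 0) * chi p k = chi p m := by
    simp only [hcond, ite_mul, one_mul, zero_mul]
    rw [Finset.sum_ite_eq' Finset.univ (-m) (chi p)]
    simp [chi_neg hp4]
  have hDE : ∑ k : ZMod p,
      (if m + k = 0 then (1:ℂ) else 0) * (if k = 0 then (1:ℂ) else 0) = 0 := by
    simp only [hcond, ite_mul, one_mul, zero_mul]
    rw [Finset.sum_ite_eq' Finset.univ (-m) (fun k => if k = 0 then (1:ℂ) else 0)]
    simp [neg_eq_zero, hm]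
  rw [Finset.sum_congr rfl fun k _ => expand k]
  simp only [Finset.sum_add_distrib, Finset.sum_sub_distrib, ← Finset.mul_sum,
    Finset.sum_const, Finset.card_univ, ZMod.card, nsmul_eq_mul]
  rw [hE, hD, hXE, hDY, hDE, sum_chi hp4, sum_chi_shift hp4 m, sum_chi_mul hp4 m hm]
  have hbb : b * b = -((Real.sin (th p) : ℂ)) ^ 2 := by
    rw [show b * b = Complex.I ^ 2 * ((Real.sin (th p) : ℂ)) ^ 2 from by rw [hb]; ring,
      Complex.I_sq]
    ring
  have key : (p : ℂ) * (a * a) + 2 * (a * c) + b * b = 0 := by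
    calc (p : ℂ) * (a * a) + 2 * (a * c) + b * b
        = (((p : ℝ) * (Real.cos (th p) * Real.cos (th p))
            + 2 * (Real.cos (th p) * (1 - Real.cos (th p))) - Real.sin (th p) ^ 2 : ℝ) : ℂ) := by
          rw [hbb, ha, hc]; push_cast; ring
      _ = 0 := by rw [key_real p]; norm_num
  linear_combination key

theorem bjorck1_cazac (p : ℕ) [hp : Fact p.Prime] (hp4 : p % 4 = 1) :
    (∀ k : ZMod p, ‖bjorck1 p k‖ = 1) ∧
      ∀ m : ZMod p, m ≠ 0 →
        (1 / (p : ℂ)) *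
          ∑ k : ZMod p, bjorck1 p (m + k) * (starRingEnd ℂ) (bjorck1 p k) = 0 := by
  constructor
  · exact abs_bjorck1 p
  · intro m hm
    have h : ∑ k : ZMod p, bjorck1 p (m + k) * (starRingEnd ℂ) (bjorck1 p k) = 0 := by
      rw [Finset.sum_congr rfl fun k _ => by rw [bjorck1_decomp, conj_bjorck1]]
      exact sum_zero p hp4 m hm
    rw [h, mul_zero]
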